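/- Let X be a nonempty subset of Zar(F) such that the ring A(X) = ⋂_{V∈X} V has quotient field F. Then J(X) = ⋂_{V∈X} 𝔪_V = 0 if and only if F itself belongs to the patch closure of X in Zar(F). -/

import Mathlib

open Set

/-- A subring `V` of a field `F` is a valuation ring of `F` (with quotient field `F`). -/
def IsValSubring (F : Type*) [Field F] (V : Subring F) : Prop :=
  ∀ t : F, t ≠ 0 → t ∈ V ∨ t⁻¹ ∈ V

/-- The Zariski-Riemann space of the field `F`: the set of valuation rings of `F`. -/
def Zar (F : Type*) [Field F] : Type _ := {V : Subring F // IsValSubring F V}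

/-- The patch (constructible) topology on `Zar F`, generated by the sets
`{V : x ∈ V}` and `{V : y ∉ V}` for `x, y ∈ F`. -/
instance Zar.patchTopology (F : Type*) [Field F] : TopologicalSpace (Zar F) :=
  TopologicalSpace.generateFrom
    ({S | ∃ x : F, S = {V : Zar F | x ∈ V.1}} ∪ {S | ∃ y : F, S = {V : Zar F | y ∉ V.1}})

variable {F : Type*} [Field F]

/-- The maximal ideal of a valuation ring of `F`, as a subset of `F`. -/
def mIdeal (V : Zar F) : Set F := {x : F | x ∈ V.1 ∧ (x = 0 ∨ x⁻¹ ∉ V.1)}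

/-- `A(X)`: the intersection of the valuation rings in `X`, as a subset of `F`. -/
def aSet (X : Set (Zar F)) : Set F := ⋂ V ∈ X, ((V : Zar F).1 : Set F)

/-- `A(X)` as a subring of `F`. -/
def ASub (X : Set (Zar F)) : Subring F := ⨅ V ∈ X, (V : Zar F).1

/-- `J(X)`: the intersection of the maximal ideals of the valuation rings in `X`. -/
def jSet (X : Set (Zar F)) : Set F := ⋂ V ∈ X, mIdeal V

/-- The set of limit points of `X` in the patch topology of `Zar F`. -/
def limPts (X : Set (Zar F)) : Set (Zar F) :=
  {V : Zar F | ∀ U : Set (Zar F), IsOpen U → V ∈ U → ∃ W ∈ X, W ≠ V ∧ W ∈ U}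


/-- The field `F` itself, as the trivial valuation ring in `Zar F`. -/
def trivV (F : Type*) [Field F] : Zar F := ⟨⊤, fun _ _ => Or.inl trivial⟩

/-- A subset `A` of `F` has quotient field `F` if every element of `F` is a quotient
of elements of `A`. -/
def HasQFSet (A : Set F) : Prop := ∀ x : F, ∃ a ∈ A, ∃ b ∈ A, b ≠ 0 ∧ x = a / b

lemma opens_finset (U : Set (Zar F)) (hU : IsOpen U) (htv : trivV F ∈ U) :
    ∃ S : Finset F, ∀ V : Zar F, (∀ x ∈ S, x ∈ V.1) → V ∈ U := by
  classical
  have hgen : TopologicalSpace.GenerateOpen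
      ({S | ∃ x : F, S = {V : Zar F | x ∈ V.1}} ∪ {S | ∃ y : F, S = {V : Zar F | y ∉ V.1}}) U :=
    hU
  clear hU
  induction hgen with
  | basic s hs =>
    rcases hs with ⟨x, rfl⟩ | ⟨y, rfl⟩
    · exact ⟨{x}, fun V hV => hV x (Finset.mem_singleton_self x)⟩
    · exact absurd (Subring.mem_top y) htv
  | univ => exact ⟨∅, fun V _ => trivial⟩
  | inter s t _ _ ihs iht =>
    obtain ⟨S1, hS1⟩ := ihs htv.1
    obtain ⟨S2, hS2⟩ := iht htv.2
    refine ⟨S1 ∪ S2, fun V hV => ⟨hS1 V fun x hx => hV x (Finset.mem_union_left _ hx),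
      hS2 V fun x hx => hV x (Finset.mem_union_right _ hx)⟩⟩
  | sUnion S _ ih =>
    obtain ⟨t, htS, hmt⟩ := htv
    obtain ⟨s, hs⟩ := ih t htS hmt
    exact ⟨s, fun V hV => ⟨t, htS, hs V hV⟩⟩

lemma key (X : Set (Zar F)) (hqf : HasQFSet (aSet X)) (hj : jSet X = {0}) (S : Finset F) :
    ∃ V ∈ X, ∀ x ∈ S, x ∈ V.1 := by
  classical
  choose a ha b hb hbne hx using hqf
  set P : F := ∏ x ∈ S, b x with hP
  have hPne : P ≠ 0 := Finset.prod_ne_zero_iff.mpr fun x _ => hbne x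
  have hPmem : ∀ V ∈ X, P ∈ (V : Zar F).1 := by
    intro V hV
    exact Subring.prod_mem _ fun x _ => by
      have := hb x
      simp only [aSet, Set.mem_iInter] at this
      exact this V hV
  have hPj : P ∉ jSet X := fun h => hPne (by rwa [hj, Set.mem_singleton_iff] at h)
  simp only [jSet, Set.mem_iInter, not_forall] at hPj
  obtain ⟨V, hVX, hVm⟩ := hPj
  have hPV : P ∈ V.1 := hPmem V hVX
  have hPinv : P⁻¹ ∈ V.1 := by
    by_contra h
    exact hVm ⟨hPV, Or.inr h⟩
  refine ⟨V, hVX, fun x hxS => ?_⟩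
  have hbV : ∀ y : F, b y ∈ V.1 := fun y => by
    have := hb y
    simp only [aSet, Set.mem_iInter] at this
    exact this V hVX
  have haV : a x ∈ V.1 := by
    have := ha x
    simp only [aSet, Set.mem_iInter] at this
    exact this V hVX
  have hQ : (∏ y ∈ S.erase x, b y) ∈ V.1 := Subring.prod_mem _ fun y _ => hbV y
  have hbinv : (b x)⁻¹ ∈ V.1 := by
    have heq : (b x)⁻¹ = (∏ y ∈ S.erase x, b y) * P⁻¹ := by
      have hprod : b x * ∏ y ∈ S.erase x, b y = P := Finset.mul_prod_erase S b hxS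
      have hQne : (∏ y ∈ S.erase x, b y) ≠ 0 :=
        Finset.prod_ne_zero_iff.mpr fun y _ => hbne y
      rw [← hprod]
      field_simp
    rw [heq]
    exact Subring.mul_mem _ hQ hPinv
  rw [hx x, div_eq_mul_inv]
  exact Subring.mul_mem _ haV hbinv

theorem stmt5 (X : Set (Zar F)) (hX : X.Nonempty) (hqf : HasQFSet (aSet X)) :
    jSet X = {0} ↔ trivV F ∈ closure X := by
  constructor
  · intro hj
    rw [mem_closure_iff]
    intro U hU htv
    obtain ⟨S, hS⟩ := opens_finset U hU htv
    obtain ⟨V, hVX, hV⟩ := key X hqf hj S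
    exact ⟨V, hS V hV, hVX⟩
  · intro hcl
    ext x
    simp only [Set.mem_singleton_iff]
    constructor
    · intro hx
      by_contra hxne
      have hopen : IsOpen {V : Zar F | x⁻¹ ∈ V.1} :=
        TopologicalSpace.isOpen_generateFrom_of_mem (Or.inl ⟨x⁻¹, rfl⟩)
      have htv : trivV F ∈ {V : Zar F | x⁻¹ ∈ V.1} :=
        show x⁻¹ ∈ (⊤ : Subring F) from Subring.mem_top _
      obtain ⟨W, hWU, hWX⟩ := (mem_closure_iff.mp hcl) _ hopen htv
      simp only [jSet, Set.mem_iInter] at hx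
      obtain ⟨_, h⟩ := hx W hWX
      rcases h with h | h
      · exact hxne h
      · exact h hWU
    · rintro rfl
      simp only [jSet, Set.mem_iInter]
      intro V hV
      exact ⟨V.1.zero_mem, Or.inl rfl⟩
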